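/- For every source p and every codeword-length vector l ∈ ℒ_n, if μ = l(1) then R*(l,p) ≥ μ + lg max(p(1), (1 − p(1))/(2^μ − 1)). -/

import Mathlib

/-- A source: a positive, monotonically nonincreasing probability mass function on `Fin n`. -/
def IsSource (n : ℕ) (p : Fin n → ℝ) : Prop :=
  (∀ i, 0 < p i) ∧ (∑ i, p i = 1) ∧ (∀ i j : Fin n, i ≤ j → p j ≤ p i)

/-- A codeword-length vector: positive integer lengths satisfying the Kraft inequality. -/
def IsCLV (n : ℕ) (l : Fin n → ℤ) : Prop :=
  (∀ i, 1 ≤ l i) ∧ (∑ i, (2:ℝ) ^ (-(l i)) ≤ 1)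

/-- Maximum pointwise redundancy `R*(l,p) = max_i (l(i) + lg p(i))`. -/
noncomputable def Rstar (n : ℕ) (l : Fin n → ℤ) (p : Fin n → ℝ) : ℝ :=
  ⨆ i : Fin n, ((l i : ℝ) + Real.logb 2 (p i))

/-- Minimum maximum pointwise redundancy over all codeword-length vectors. -/
noncomputable def RstarOpt (n : ℕ) (p : Fin n → ℝ) : ℝ :=
  sInf {r : ℝ | ∃ l : Fin n → ℤ, IsCLV n l ∧ Rstar n l p = r}

lemma logb2_zpow (m : ℤ) : Real.logb 2 ((2:ℝ)^m) = m := by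
  rw [Real.logb, Real.log_zpow, mul_div_assoc,
    div_self (ne_of_gt (Real.log_pos one_lt_two)), mul_one]

theorem stmt8 (n : ℕ) (hn : 2 ≤ n) (p : Fin n → ℝ) (hp : IsSource n p)
    (l : Fin n → ℤ) (hl : IsCLV n l) (μ : ℤ) (hμ : μ = l ⟨0, by omega⟩) :
    (μ:ℝ) + Real.logb 2 (max (p ⟨0, by omega⟩)
      ((1 - p ⟨0, by omega⟩) / ((2:ℝ) ^ μ - 1))) ≤ Rstar n l p := by
  obtain ⟨hpos, hsum, hmono⟩ := hp
  obtain ⟨hl1, hkraft⟩ := hl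
  set i0 : Fin n := ⟨0, by omega⟩ with hi0
  set i1 : Fin n := ⟨1, by omega⟩ with hi1
  have hne : i1 ≠ i0 := by simp [hi0, hi1, Fin.ext_iff]
  have hbdd : BddAbove (Set.range fun i : Fin n => ((l i : ℝ) + Real.logb 2 (p i))) :=
    Set.Finite.bddAbove (Set.finite_range _)
  have hle : ∀ i : Fin n, (l i : ℝ) + Real.logb 2 (p i) ≤ Rstar n l p :=
    fun i => le_ciSup hbdd i
  -- p i0 < 1
  have hperase : ∑ i ∈ Finset.univ.erase i0, p i = 1 - p i0 := by
    have h := Finset.sum_erase_add Finset.univ p (Finset.mem_univ i0)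
    rw [hsum] at h; linarith
  have hp1lt : p i0 < 1 := by
    have h1 : p i1 ≤ ∑ i ∈ Finset.univ.erase i0, p i :=
      Finset.single_le_sum (f := p) (fun i _ => (hpos i).le)
        (Finset.mem_erase.mpr ⟨hne, Finset.mem_univ i1⟩)
    have := hpos i1
    linarith [hperase]
  have hμ1 : 1 ≤ μ := hμ ▸ hl1 i0
  have h2μ : (2:ℝ) ≤ (2:ℝ)^μ := by
    calc (2:ℝ) = (2:ℝ)^(1:ℤ) := by norm_num
    _ ≤ (2:ℝ)^μ := zpow_le_zpow_right₀ one_le_two hμ1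
  have hKpos : (0:ℝ) < (2:ℝ)^μ - 1 := by linarith
  have hBpos : (0:ℝ) < (2:ℝ)^μ := by linarith
  have hid : ((2:ℝ)^μ - 1) * (2:ℝ)^(-μ) = 1 - (2:ℝ)^(-μ) := by
    rw [sub_mul, ← zpow_add₀ (two_ne_zero)]; simp
  -- Kraft split
  have hsplit : ∑ i ∈ Finset.univ.erase i0, (2:ℝ)^(-(l i)) ≤ 1 - (2:ℝ)^(-μ) := by
    have h := Finset.sum_erase_add Finset.univ (fun i => (2:ℝ)^(-(l i)))
      (Finset.mem_univ i0)
    rw [hμ]; linarith [hkraft]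
  -- existence of a good index
  have hex : ∃ i ∈ Finset.univ.erase i0,
      (1 - p i0) * (2:ℝ)^(-(l i)) ≤ p i * (((2:ℝ)^μ - 1) * (2:ℝ)^(-μ)) := by
    by_contra h
    push_neg at h
    have hlt : ∑ i ∈ Finset.univ.erase i0, p i * (((2:ℝ)^μ - 1) * (2:ℝ)^(-μ))
        < ∑ i ∈ Finset.univ.erase i0, (1 - p i0) * (2:ℝ)^(-(l i)) := by
      refine Finset.sum_lt_sum_of_nonempty ⟨i1, Finset.mem_erase.mpr ⟨hne, Finset.mem_univ i1⟩⟩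
        (fun i hi => h i hi)
    rw [← Finset.sum_mul, hperase, ← Finset.mul_sum] at hlt
    have h2 : (1 - p i0) * ∑ i ∈ Finset.univ.erase i0, (2:ℝ)^(-(l i))
        ≤ (1 - p i0) * (1 - (2:ℝ)^(-μ)) :=
      mul_le_mul_of_nonneg_left hsplit (by linarith)
    rw [hid] at hlt
    linarith
  obtain ⟨i, _, hi⟩ := hex
  -- key inequality in multiplicative form
  have hApos : (0:ℝ) < (2:ℝ)^(l i) := zpow_pos two_pos _
  have hkey : (2:ℝ)^μ * ((1 - p i0) / ((2:ℝ)^μ - 1)) ≤ (2:ℝ)^(l i) * p i := by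
    rw [mul_div_assoc', div_le_iff₀ hKpos]
    rw [zpow_neg, zpow_neg] at hi
    rw [show (1 - p i0) * ((2:ℝ)^(l i))⁻¹ = (1 - p i0) / (2:ℝ)^(l i) by ring,
      show p i * (((2:ℝ)^μ - 1) * ((2:ℝ)^μ)⁻¹) = p i * ((2:ℝ)^μ - 1) / (2:ℝ)^μ by ring,
      div_le_div_iff₀ hApos hBpos] at hi
    linarith
  -- conclude
  rcases max_choice (p i0) ((1 - p i0) / ((2:ℝ)^μ - 1)) with hmax | hmax
  · rw [hmax, hμ]
    exact hle i0
  · rw [hmax]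
    refine le_trans ?_ (hle i)
    have hq : (0:ℝ) < (1 - p i0) / ((2:ℝ)^μ - 1) := div_pos (by linarith) hKpos
    have lhs_eq : (μ:ℝ) + Real.logb 2 ((1 - p i0) / ((2:ℝ)^μ - 1))
        = Real.logb 2 ((2:ℝ)^μ * ((1 - p i0) / ((2:ℝ)^μ - 1))) := by
      rw [Real.logb_mul (ne_of_gt hBpos) (ne_of_gt hq), logb2_zpow]
    have rhs_eq : (l i : ℝ) + Real.logb 2 (p i)
        = Real.logb 2 ((2:ℝ)^(l i) * p i) := by
      rw [Real.logb_mul (ne_of_gt hApos) (ne_of_gt (hpos i)), logb2_zpow]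
    rw [lhs_eq, rhs_eq]
    exact Real.logb_le_logb_of_le one_lt_two (mul_pos hBpos hq) hkey
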